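/- Let θ > 0, r, ρ ∈ ℝ, v = 2π/θ, k ∈ ℕ, and T with kθ ≤ T < (k+1)θ; let f₀ : ℝ → ℝ be bounded measurable. Suppose α* : ℝ → ℝ is measurable with 0 ≤ α* ≤ 1 a.e. and maximizes G over all such admissible controls, and let w : ℝ → ℝ be bounded measurable such that 0 ≤ α* + εw ≤ 1 a.e. for all sufficiently small ε > 0. Then Σ_{l=0}^{k−1} ∫_0^{θ} e^{−ρ(t+θl)} [ w(t+θl)(1−2α*(t+θl)) f_l^{α*}(t) + α*(t+θl)(1−α*(t+θl)) z_l(t) ] dt + ∫_0^{T−kθ} e^{−ρ(t+θk)} [ w(t+θk)(1−2α*(t+θk)) f_k^{α*}(t) + α*(t+θk)(1−α*(t+θk)) z_k(t) ] dt ≤ 0, where z_0(t) = 0 and z_{l+1}(t) = e^{rθ}[ −w(t+θl) f_l^{α*}(t) + (1−α*(t+θl)) z_l(t) ]. -/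

import Mathlib

open MeasureTheory

/-- The round-`l` density just before harvesting in the spatial harvesting model:
`fDen r θ f₀ α 0 t = e^{rt} f₀(vt)` with speed `v = 2π/θ`, and
`fDen r θ f₀ α (l+1) t = e^{rθ}(1 − α(t+θl)) · fDen r θ f₀ α l t`. -/
noncomputable def fDen (r θ : ℝ) (f₀ α : ℝ → ℝ) : ℕ → ℝ → ℝ
  | 0, t => Real.exp (r * t) * f₀ (2 * Real.pi / θ * t)
  | l + 1, t =>
      Real.exp (r * θ) * (1 - α (t + θ * (l : ℝ))) * fDen r θ f₀ α l t

/-- The sensitivity (Gateaux derivative of the state in direction `w`):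
`z_0 = 0`, `z_{l+1}(t) = e^{rθ}[−w(t+θl) f_l^{α}(t) + (1−α(t+θl)) z_l(t)]`. -/
noncomputable def zSens (r θ : ℝ) (f₀ α w : ℝ → ℝ) : ℕ → ℝ → ℝ
  | 0, _ => 0
  | l + 1, t =>
      Real.exp (r * θ) *
        (-(w (t + θ * (l : ℝ))) * fDen r θ f₀ α l t +
          (1 - α (t + θ * (l : ℝ))) * zSens r θ f₀ α w l t)

/-- The discounted revenue functional
`G(α) = Σ_{l=0}^{k−1} ∫_0^θ e^{−ρ(t+θl)} α(t+θl)(1−α(t+θl)) f_l^{α}(t) dt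
      + ∫_0^{T−kθ} e^{−ρ(t+θk)} α(t+θk)(1−α(t+θk)) f_k^{α}(t) dt`. -/
noncomputable def revenue (r ρ θ T : ℝ) (k : ℕ) (f₀ α : ℝ → ℝ) : ℝ :=
  (∑ l ∈ Finset.range k, ∫ t in (0 : ℝ)..θ,
      Real.exp (-ρ * (t + θ * (l : ℝ))) * α (t + θ * (l : ℝ)) *
        (1 - α (t + θ * (l : ℝ))) * fDen r θ f₀ α l t) +
    ∫ t in (0 : ℝ)..(T - (k : ℝ) * θ),
      Real.exp (-ρ * (t + θ * (k : ℝ))) * α (t + θ * (k : ℝ)) *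
        (1 - α (t + θ * (k : ℝ))) * fDen r θ f₀ α k t

/-- A harvesting-share control is admissible if it is measurable with
`0 ≤ α ≤ 1` almost everywhere. -/
def Admissible (α : ℝ → ℝ) : Prop :=
  Measurable α ∧ ∀ᵐ t : ℝ, 0 ≤ α t ∧ α t ≤ 1

lemma measurable_fDen (r θ : ℝ) {f₀ α : ℝ → ℝ} (hf : Measurable f₀)
    (hα : Measurable α) : ∀ l, Measurable (fDen r θ f₀ α l) := by
  intro l
  induction l with
  | zero =>
      exact ((Real.measurable_exp.comp (measurable_const_mul r)).mul
        (hf.comp (measurable_const_mul _)))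
  | succ l ih =>
      exact ((measurable_const.mul ((measurable_const.sub
        (hα.comp (measurable_add_const _))))).mul ih)

lemma measurable_zSens (r θ : ℝ) {f₀ α w : ℝ → ℝ} (hf : Measurable f₀)
    (hα : Measurable α) (hw : Measurable w) : ∀ l, Measurable (zSens r θ f₀ α w l) := by
  intro l
  induction l with
  | zero => exact measurable_const
  | succ l ih =>
      exact measurable_const.mul
        (((((hw.comp (measurable_add_const _)).neg)).mul (measurable_fDen r θ hf hα l)).add
          ((measurable_const.sub (hα.comp (measurable_add_const _))).mul ih))

noncomputable def Db (E M W : ℝ) (l : ℕ) : ℝ := E * M * (E * (1 + W)) ^ l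

noncomputable def Zb (E M W : ℝ) : ℕ → ℝ
  | 0 => 0
  | l + 1 => E * (W * Db E M W l + Zb E M W l)

noncomputable def Rb (E M W : ℝ) : ℕ → ℝ
  | 0 => 0
  | l + 1 => E * ((1 + W) * Rb E M W l + W * Zb E M W l)

lemma Db_nonneg {E M W : ℝ} (hE : 0 ≤ E) (hM : 0 ≤ M) (hW : 0 ≤ W) (l : ℕ) :
    0 ≤ Db E M W l := by
  have : (0:ℝ) ≤ E * (1 + W) := by positivity
  exact mul_nonneg (mul_nonneg hE hM) (pow_nonneg this l)

lemma Zb_nonneg {E M W : ℝ} (hE : 0 ≤ E) (hM : 0 ≤ M) (hW : 0 ≤ W) (l : ℕ) :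
    0 ≤ Zb E M W l := by
  induction l with
  | zero => simp [Zb]
  | succ l ih =>
      have := Db_nonneg hE hM hW l
      simp only [Zb]; positivity

lemma Rb_nonneg {E M W : ℝ} (hE : 0 ≤ E) (hM : 0 ≤ M) (hW : 0 ≤ W) (l : ℕ) :
    0 ≤ Rb E M W l := by
  induction l with
  | zero => simp [Rb]
  | succ l ih =>
      have := Zb_nonneg hE hM hW l
      simp only [Rb]; positivity

lemma key_est (r θ : ℝ) (hθ : 0 < θ) (f₀ αs w : ℝ → ℝ) (M W : ℝ)
    (hM : 0 ≤ M) (hW : 1 ≤ W) (hf : ∀ x, |f₀ x| ≤ M) (hw : ∀ x, |w x| ≤ W)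
    (ε : ℝ) (hε : |ε| ≤ 1) (t : ℝ) (ht0 : 0 ≤ t) (ht1 : t ≤ θ)
    (hα : ∀ j : ℕ, 0 ≤ αs (t + θ * (j : ℝ)) ∧ αs (t + θ * (j : ℝ)) ≤ 1) :
    ∀ l : ℕ,
      |fDen r θ f₀ αs l t| ≤ Db (Real.exp (|r| * θ)) M W l ∧
      |fDen r θ f₀ (fun s => αs s + ε * w s) l t| ≤ Db (Real.exp (|r| * θ)) M W l ∧
      |zSens r θ f₀ αs w l t| ≤ Zb (Real.exp (|r| * θ)) M W l ∧
      |fDen r θ f₀ (fun s => αs s + ε * w s) l t - fDen r θ f₀ αs l t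
        - ε * zSens r θ f₀ αs w l t| ≤ ε ^ 2 * Rb (Real.exp (|r| * θ)) M W l := by
  set E := Real.exp (|r| * θ) with hE
  have hE1 : 1 ≤ E := Real.one_le_exp (by positivity)
  have hE0 : 0 ≤ E := le_trans zero_le_one hE1
  have hW0 : 0 ≤ W := le_trans zero_le_one hW
  have hexprθ : Real.exp (r * θ) ≤ E := by
    apply Real.exp_le_exp.2
    exact mul_le_mul_of_nonneg_right (le_abs_self r) (le_of_lt hθ)
  have hexprθ0 : 0 ≤ Real.exp (r * θ) := (Real.exp_pos _).le
  intro l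
  induction l with
  | zero =>
      have h0 : |Real.exp (r * t) * f₀ (2 * Real.pi / θ * t)| ≤ E * M := by
        rw [abs_mul]
        apply mul_le_mul _ (hf _) (abs_nonneg _) hE0
        rw [abs_of_nonneg (Real.exp_pos _).le]
        apply Real.exp_le_exp.2
        calc r * t ≤ |r| * t := mul_le_mul_of_nonneg_right (le_abs_self r) ht0
          _ ≤ |r| * θ := mul_le_mul_of_nonneg_left ht1 (abs_nonneg r)
      refine ⟨?_, ?_, ?_, ?_⟩
      · simpa [fDen, Db] using h0
      · simpa [fDen, Db] using h0
      · simp [zSens, Zb]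
      · simp [fDen, zSens, Rb]
  | succ l ih =>
      obtain ⟨hf1, hF1, hz1, hr1⟩ := ih
      set a := αs (t + θ * (l : ℝ)) with ha
      set b := w (t + θ * (l : ℝ)) with hb
      have ha01 := hα l
      have hbW : |b| ≤ W := hw _
      set F := fDen r θ f₀ (fun s => αs s + ε * w s) l t with hF
      set f := fDen r θ f₀ αs l t with hfd
      set z := zSens r θ f₀ αs w l t with hz
      have h1a : |1 - a| ≤ 1 := by rw [abs_le]; constructor <;> linarith [ha01.1, ha01.2]
      have h1ab : |1 - (a + ε * b)| ≤ 1 + W := by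
        have : |ε * b| ≤ W := by
          rw [abs_mul]
          calc |ε| * |b| ≤ 1 * W := mul_le_mul hε hbW (abs_nonneg _) zero_le_one
            _ = W := one_mul W
        calc |1 - (a + ε * b)| ≤ |1 - a| + |ε * b| := by
              have : 1 - (a + ε * b) = (1 - a) - ε * b := by ring
              rw [this]; exact abs_sub _ _
          _ ≤ 1 + W := add_le_add h1a this
      refine ⟨?_, ?_, ?_, ?_⟩
      · -- |f_{l+1}|
        show |Real.exp (r * θ) * (1 - a) * f| ≤ Db E M W (l + 1)
        rw [abs_mul, abs_mul]
        have : |Real.exp (r * θ)| * |1 - a| ≤ E * (1 + W) := by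
          rw [abs_of_nonneg hexprθ0]
          apply mul_le_mul hexprθ (le_trans h1a (by linarith)) (abs_nonneg _) hE0
        calc |Real.exp (r * θ)| * |1 - a| * |f| ≤ (E * (1 + W)) * Db E M W l :=
              mul_le_mul this hf1 (abs_nonneg _) (by positivity)
          _ = Db E M W (l + 1) := by rw [Db, Db, pow_succ]; ring
      · show |Real.exp (r * θ) * (1 - (a + ε * b)) * F| ≤ Db E M W (l + 1)
        rw [abs_mul, abs_mul]
        have : |Real.exp (r * θ)| * |1 - (a + ε * b)| ≤ E * (1 + W) := by
          rw [abs_of_nonneg hexprθ0]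
          exact mul_le_mul hexprθ h1ab (abs_nonneg _) hE0
        calc |Real.exp (r * θ)| * |1 - (a + ε * b)| * |F| ≤ (E * (1 + W)) * Db E M W l :=
              mul_le_mul this hF1 (abs_nonneg _) (by positivity)
          _ = Db E M W (l + 1) := by rw [Db, Db, pow_succ]; ring
      · show |Real.exp (r * θ) * (-b * f + (1 - a) * z)| ≤ Zb E M W (l + 1)
        rw [abs_mul, abs_of_nonneg hexprθ0]
        have h2 : |-b * f + (1 - a) * z| ≤ W * Db E M W l + Zb E M W l := by
          calc |-b * f + (1 - a) * z| ≤ |(-b) * f| + |(1 - a) * z| := abs_add_le _ _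
            _ = |b| * |f| + |1 - a| * |z| := by rw [abs_mul, abs_mul, abs_neg]
            _ ≤ W * Db E M W l + 1 * Zb E M W l :=
                add_le_add (mul_le_mul hbW hf1 (abs_nonneg _) hW0)
                  (mul_le_mul h1a hz1 (abs_nonneg _) zero_le_one)
            _ = W * Db E M W l + Zb E M W l := by ring
        calc Real.exp (r * θ) * |-b * f + (1 - a) * z|
            ≤ E * (W * Db E M W l + Zb E M W l) :=
              mul_le_mul hexprθ h2 (abs_nonneg _)
                hE0
          _ = Zb E M W (l + 1) := rfl
      · -- remainder
        have hid : fDen r θ f₀ (fun s => αs s + ε * w s) (l+1) t - fDen r θ f₀ αs (l+1) t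
            - ε * zSens r θ f₀ αs w (l+1) t
            = Real.exp (r * θ) * ((1 - a) * (F - f - ε * z) - ε * b * (F - f - ε * z)
                - ε ^ 2 * b * z) := by
          show Real.exp (r * θ) * (1 - (a + ε * b)) * F
              - Real.exp (r * θ) * (1 - a) * f
              - ε * (Real.exp (r * θ) * (-b * f + (1 - a) * z)) = _
          ring
        rw [hid, abs_mul, abs_of_nonneg hexprθ0]
        set ρ := F - f - ε * z with hρ
        have hterm : |(1 - a) * ρ - ε * b * ρ - ε ^ 2 * b * z|
            ≤ (1 + W) * (ε ^ 2 * Rb E M W l) + W * (ε ^ 2 * Zb E M W l) := by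
          have t1 : |(1 - a) * ρ| ≤ 1 * (ε ^ 2 * Rb E M W l) := by
            rw [abs_mul, one_mul]
            exact mul_le_mul h1a hr1 (abs_nonneg _) zero_le_one |>.trans
              (by rw [one_mul])
          have t2 : |ε * b * ρ| ≤ W * (ε ^ 2 * Rb E M W l) := by
            rw [abs_mul, abs_mul]
            have : |ε| * |b| ≤ W := by
              calc |ε| * |b| ≤ 1 * W := mul_le_mul hε hbW (abs_nonneg _) zero_le_one
                _ = W := one_mul W
            exact mul_le_mul this hr1 (abs_nonneg _) hW0
          have t3 : |ε ^ 2 * b * z| ≤ W * (ε ^ 2 * Zb E M W l) := by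
            rw [abs_mul, abs_mul]
            have h1 : |ε ^ 2| = ε ^ 2 := abs_of_nonneg (sq_nonneg ε)
            rw [h1]
            calc ε ^ 2 * |b| * |z| ≤ ε ^ 2 * W * Zb E M W l := by
                  apply mul_le_mul (mul_le_mul_of_nonneg_left hbW (sq_nonneg ε)) hz1
                    (abs_nonneg _) (by positivity)
              _ = W * (ε ^ 2 * Zb E M W l) := by ring
          calc |(1 - a) * ρ - ε * b * ρ - ε ^ 2 * b * z|
              ≤ |(1 - a) * ρ| + |ε * b * ρ| + |ε ^ 2 * b * z| := by
                exact (abs_sub _ _).trans (add_le_add (abs_sub _ _) le_rfl)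
            _ ≤ 1 * (ε ^ 2 * Rb E M W l) + W * (ε ^ 2 * Rb E M W l)
                + W * (ε ^ 2 * Zb E M W l) := by gcongr
            _ = (1 + W) * (ε ^ 2 * Rb E M W l) + W * (ε ^ 2 * Zb E M W l) := by ring
        calc Real.exp (r * θ) * |(1 - a) * ρ - ε * b * ρ - ε ^ 2 * b * z|
            ≤ E * ((1 + W) * (ε ^ 2 * Rb E M W l) + W * (ε ^ 2 * Zb E M W l)) := by
              apply mul_le_mul hexprθ hterm (abs_nonneg _) hE0
          _ = ε ^ 2 * Rb E M W (l + 1) := by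
              show _ = ε ^ 2 * (E * ((1 + W) * Rb E M W l + W * Zb E M W l))
              ring

lemma abs_mul_le4 {x1 x2 x3 x4 y1 y2 y3 y4 : ℝ} (h1 : |x1| ≤ y1) (h2 : |x2| ≤ y2)
    (h3 : |x3| ≤ y3) (h4 : |x4| ≤ y4) : |x1 * x2 * x3 * x4| ≤ y1 * y2 * y3 * y4 := by
  have n1 : 0 ≤ y1 := le_trans (abs_nonneg _) h1
  have n2 : 0 ≤ y2 := le_trans (abs_nonneg _) h2
  have n3 : 0 ≤ y3 := le_trans (abs_nonneg _) h3
  rw [abs_mul, abs_mul, abs_mul]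
  exact mul_le_mul (mul_le_mul (mul_le_mul h1 h2 (abs_nonneg _) n1) h3 (abs_nonneg _)
    (by positivity)) h4 (abs_nonneg _) (by positivity)

lemma abs_mul_le2 {x1 x2 y1 y2 : ℝ} (h1 : |x1| ≤ y1) (h2 : |x2| ≤ y2) :
    |x1 * x2| ≤ y1 * y2 := by
  have n1 : 0 ≤ y1 := le_trans (abs_nonneg _) h1
  rw [abs_mul]
  exact mul_le_mul h1 h2 (abs_nonneg _) n1

lemma intervalIntegrable_of_bound {g : ℝ → ℝ} {B c : ℝ} (hB : 0 ≤ B)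
    (hm : Measurable g) (hb : ∀ᵐ t : ℝ, t ∈ Set.Ioc (0:ℝ) B → |g t| ≤ c) :
    IntervalIntegrable g volume 0 B := by
  rw [intervalIntegrable_iff_integrableOn_Ioc_of_le hB]
  apply Integrable.mono' (g := fun _ => c)
    (integrableOn_const measure_Ioc_lt_top.ne) hm.aestronglyMeasurable
  rw [ae_restrict_iff' measurableSet_Ioc]
  filter_upwards [hb] with t h ht
  rw [Real.norm_eq_abs]
  exact h ht

noncomputable def Cb (P0 E M W : ℝ) (l : ℕ) : ℝ :=
  P0 * ((1 + W) * Rb E M W l + W * Zb E M W l + W ^ 2 * Db E M W l)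

lemma Cb_nonneg {P0 E M W : ℝ} (hP0 : 0 ≤ P0) (hE : 0 ≤ E) (hM : 0 ≤ M) (hW : 0 ≤ W)
    (l : ℕ) : 0 ≤ Cb P0 E M W l := by
  have h1 := Rb_nonneg hE hM hW l
  have h2 := Zb_nonneg hE hM hW l
  have h3 := Db_nonneg hE hM hW l
  unfold Cb; positivity


/-- Lemma 1: first-order variational inequality without impulses.
If `α*` maximizes the revenue functional over admissible controls and `w` is an
admissible perturbation direction, then the first variation is nonpositive. -/
theorem variational_inequality
    (θ : ℝ) (hθ : 0 < θ) (r ρ : ℝ) (k : ℕ) (T : ℝ)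
    (hT₁ : (k : ℝ) * θ ≤ T) (hT₂ : T < ((k : ℝ) + 1) * θ)
    (f₀ : ℝ → ℝ) (hf₀m : Measurable f₀) (hf₀b : ∃ M, ∀ x, |f₀ x| ≤ M)
    (αs : ℝ → ℝ) (hαs : Admissible αs)
    (hopt : ∀ α : ℝ → ℝ, Admissible α →
      revenue r ρ θ T k f₀ α ≤ revenue r ρ θ T k f₀ αs)
    (w : ℝ → ℝ) (hwm : Measurable w) (hwb : ∃ M, ∀ x, |w x| ≤ M)
    (hpert : ∃ ε₀ > (0 : ℝ), ∀ ε : ℝ, 0 < ε → ε ≤ ε₀ →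
      ∀ᵐ t : ℝ, 0 ≤ αs t + ε * w t ∧ αs t + ε * w t ≤ 1) :
    (∑ l ∈ Finset.range k, ∫ t in (0 : ℝ)..θ,
        Real.exp (-ρ * (t + θ * (l : ℝ))) *
          (w (t + θ * (l : ℝ)) * (1 - 2 * αs (t + θ * (l : ℝ))) * fDen r θ f₀ αs l t +
            αs (t + θ * (l : ℝ)) * (1 - αs (t + θ * (l : ℝ))) * zSens r θ f₀ αs w l t)) +
      (∫ t in (0 : ℝ)..(T - (k : ℝ) * θ),
        Real.exp (-ρ * (t + θ * (k : ℝ))) *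
          (w (t + θ * (k : ℝ)) * (1 - 2 * αs (t + θ * (k : ℝ))) * fDen r θ f₀ αs k t +
            αs (t + θ * (k : ℝ)) * (1 - αs (t + θ * (k : ℝ))) * zSens r θ f₀ αs w k t))
      ≤ 0 := by
  obtain ⟨M₀, hM₀⟩ := hf₀b
  obtain ⟨W₀, hW₀⟩ := hwb
  obtain ⟨ε₀, hε₀, hpert⟩ := hpert
  set M := max M₀ 0 with hMdef
  set W := max W₀ 1 with hWdef
  have hM0 : 0 ≤ M := le_max_right _ _
  have hW1 : 1 ≤ W := le_max_right _ _
  have hW0 : 0 ≤ W := zero_le_one.trans hW1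
  have hf : ∀ x, |f₀ x| ≤ M := fun x => (hM₀ x).trans (le_max_left _ _)
  have hw : ∀ x, |w x| ≤ W := fun x => (hW₀ x).trans (le_max_left _ _)
  set E := Real.exp (|r| * θ) with hEdef
  set P0 := Real.exp (|ρ| * (((k : ℝ) + 1) * θ)) with hP0def
  have hE0 : 0 ≤ E := (Real.exp_pos _).le
  have hP00 : 0 ≤ P0 := (Real.exp_pos _).le
  set C := (∑ l ∈ Finset.range k, θ * Cb P0 E M W l) + θ * Cb P0 E M W k with hCdef
  have hC0 : 0 ≤ C := by
    apply add_nonneg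
    · exact Finset.sum_nonneg fun l _ =>
        mul_nonneg hθ.le (Cb_nonneg hP00 hE0 hM0 hW0 l)
    · exact mul_nonneg hθ.le (Cb_nonneg hP00 hE0 hM0 hW0 k)
  have hGood : ∀ᵐ t : ℝ, ∀ j : ℕ, 0 ≤ αs (t + θ * (j : ℝ)) ∧ αs (t + θ * (j : ℝ)) ≤ 1 := by
    rw [MeasureTheory.ae_all_iff]
    intro j
    exact (measurePreserving_add_right volume (θ * (j : ℝ))).quasiMeasurePreserving.ae hαs.2
  have key : ∀ ε : ℝ, 0 < ε → ε ≤ ε₀ → ε ≤ 1 →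
      ((∑ l ∈ Finset.range k, ∫ t in (0 : ℝ)..θ,
        Real.exp (-ρ * (t + θ * (l : ℝ))) *
          (w (t + θ * (l : ℝ)) * (1 - 2 * αs (t + θ * (l : ℝ))) * fDen r θ f₀ αs l t +
            αs (t + θ * (l : ℝ)) * (1 - αs (t + θ * (l : ℝ))) * zSens r θ f₀ αs w l t)) +
      (∫ t in (0 : ℝ)..(T - (k : ℝ) * θ),
        Real.exp (-ρ * (t + θ * (k : ℝ))) *
          (w (t + θ * (k : ℝ)) * (1 - 2 * αs (t + θ * (k : ℝ))) * fDen r θ f₀ αs k t +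
            αs (t + θ * (k : ℝ)) * (1 - αs (t + θ * (k : ℝ))) * zSens r θ f₀ αs w k t)))
      ≤ ε * C := by
    intro ε hε1 hε2 hε3
    have hεabs : |ε| ≤ 1 := by rw [abs_of_pos hε1]; exact hε3
    have hαεm : Measurable (fun s => αs s + ε * w s) := hαs.1.add (hwm.const_mul ε)
    have hadm : Admissible (fun s => αs s + ε * w s) := ⟨hαεm, hpert ε hε1 hε2⟩
    have hrev := hopt _ hadm
    simp only [revenue] at hrev
    have main : ∀ l : ℕ, l ≤ k → ∀ B : ℝ, 0 ≤ B → B ≤ θ →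
        |(∫ t in (0:ℝ)..B, Real.exp (-ρ * (t + θ * (l : ℝ))) *
            (αs (t + θ * (l : ℝ)) + ε * w (t + θ * (l : ℝ))) *
            (1 - (αs (t + θ * (l : ℝ)) + ε * w (t + θ * (l : ℝ)))) *
            fDen r θ f₀ (fun s => αs s + ε * w s) l t)
          - (∫ t in (0:ℝ)..B, Real.exp (-ρ * (t + θ * (l : ℝ))) * αs (t + θ * (l : ℝ)) *
            (1 - αs (t + θ * (l : ℝ))) * fDen r θ f₀ αs l t)
          - ε * (∫ t in (0:ℝ)..B, Real.exp (-ρ * (t + θ * (l : ℝ))) *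
              (w (t + θ * (l : ℝ)) * (1 - 2 * αs (t + θ * (l : ℝ))) * fDen r θ f₀ αs l t +
                αs (t + θ * (l : ℝ)) * (1 - αs (t + θ * (l : ℝ))) * zSens r θ f₀ αs w l t))|
        ≤ ε ^ 2 * (θ * Cb P0 E M W l) := by
      intro l hl B hB0 hBθ
      have hlk : (l : ℝ) ≤ (k : ℝ) := Nat.cast_le.2 hl
      have hl0 : (0:ℝ) ≤ (l : ℝ) := Nat.cast_nonneg l
      have hexpP : ∀ t : ℝ, 0 ≤ t → t ≤ θ → |Real.exp (-ρ * (t + θ * (l : ℝ)))| ≤ P0 := by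
        intro t ht0 ht1
        rw [abs_of_nonneg (Real.exp_pos _).le, hP0def]
        apply Real.exp_le_exp.2
        have h1 : 0 ≤ t + θ * (l : ℝ) := by positivity
        have h2 : t + θ * (l : ℝ) ≤ ((k : ℝ) + 1) * θ := by nlinarith
        calc -ρ * (t + θ * (l : ℝ)) ≤ |ρ| * (t + θ * (l : ℝ)) :=
              mul_le_mul_of_nonneg_right (neg_le_abs ρ) h1
          _ ≤ |ρ| * (((k : ℝ) + 1) * θ) := mul_le_mul_of_nonneg_left h2 (abs_nonneg ρ)
      have hsm : Measurable fun t : ℝ => t + θ * (l : ℝ) := measurable_add_const _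
      have hem : Measurable fun t : ℝ => Real.exp (-ρ * (t + θ * (l : ℝ))) :=
        Real.measurable_exp.comp (hsm.const_mul (-ρ))
      have hαm := hαs.1
      have hcm : Measurable fun t : ℝ => αs (t + θ * (l : ℝ)) + ε * w (t + θ * (l : ℝ)) :=
        (hαm.comp hsm).add ((hwm.comp hsm).const_mul ε)
      have hGεm : Measurable fun t : ℝ => Real.exp (-ρ * (t + θ * (l : ℝ))) *
          (αs (t + θ * (l : ℝ)) + ε * w (t + θ * (l : ℝ))) *
          (1 - (αs (t + θ * (l : ℝ)) + ε * w (t + θ * (l : ℝ)))) *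
          fDen r θ f₀ (fun s => αs s + ε * w s) l t :=
        ((hem.mul hcm).mul (measurable_const.sub hcm)).mul (measurable_fDen r θ hf₀m hαεm l)
      have hG0m : Measurable fun t : ℝ => Real.exp (-ρ * (t + θ * (l : ℝ))) *
          αs (t + θ * (l : ℝ)) * (1 - αs (t + θ * (l : ℝ))) * fDen r θ f₀ αs l t :=
        ((hem.mul (hαm.comp hsm)).mul (measurable_const.sub (hαm.comp hsm))).mul
          (measurable_fDen r θ hf₀m hαm l)
      have hDdm : Measurable fun t : ℝ => Real.exp (-ρ * (t + θ * (l : ℝ))) *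
          (w (t + θ * (l : ℝ)) * (1 - 2 * αs (t + θ * (l : ℝ))) * fDen r θ f₀ αs l t +
            αs (t + θ * (l : ℝ)) * (1 - αs (t + θ * (l : ℝ))) * zSens r θ f₀ αs w l t) :=
        hem.mul ((((hwm.comp hsm).mul (measurable_const.sub
            ((hαm.comp hsm).const_mul 2))).mul (measurable_fDen r θ hf₀m hαm l)).add
          (((hαm.comp hsm).mul (measurable_const.sub (hαm.comp hsm))).mul
            (measurable_zSens r θ hf₀m hαm hwm l)))
      have hae : ∀ᵐ t : ℝ, t ∈ Set.Ioc (0:ℝ) B →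
          (|Real.exp (-ρ * (t + θ * (l : ℝ))) *
              (αs (t + θ * (l : ℝ)) + ε * w (t + θ * (l : ℝ))) *
              (1 - (αs (t + θ * (l : ℝ)) + ε * w (t + θ * (l : ℝ)))) *
              fDen r θ f₀ (fun s => αs s + ε * w s) l t| ≤ P0 * (1 + W) * (1 + W) * Db E M W l ∧
           |Real.exp (-ρ * (t + θ * (l : ℝ))) * αs (t + θ * (l : ℝ)) *
              (1 - αs (t + θ * (l : ℝ))) * fDen r θ f₀ αs l t| ≤ P0 * 1 * 1 * Db E M W l ∧
           |Real.exp (-ρ * (t + θ * (l : ℝ))) *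
              (w (t + θ * (l : ℝ)) * (1 - 2 * αs (t + θ * (l : ℝ))) * fDen r θ f₀ αs l t +
                αs (t + θ * (l : ℝ)) * (1 - αs (t + θ * (l : ℝ))) * zSens r θ f₀ αs w l t)|
              ≤ P0 * (W * 1 * Db E M W l + 1 * 1 * Zb E M W l) ∧
           |Real.exp (-ρ * (t + θ * (l : ℝ))) *
              (αs (t + θ * (l : ℝ)) + ε * w (t + θ * (l : ℝ))) *
              (1 - (αs (t + θ * (l : ℝ)) + ε * w (t + θ * (l : ℝ)))) *
              fDen r θ f₀ (fun s => αs s + ε * w s) l t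
            - Real.exp (-ρ * (t + θ * (l : ℝ))) * αs (t + θ * (l : ℝ)) *
              (1 - αs (t + θ * (l : ℝ))) * fDen r θ f₀ αs l t
            - ε * (Real.exp (-ρ * (t + θ * (l : ℝ))) *
              (w (t + θ * (l : ℝ)) * (1 - 2 * αs (t + θ * (l : ℝ))) * fDen r θ f₀ αs l t +
                αs (t + θ * (l : ℝ)) * (1 - αs (t + θ * (l : ℝ))) * zSens r θ f₀ αs w l t))|
              ≤ ε ^ 2 * Cb P0 E M W l) := by
        filter_upwards [hGood] with t hGt htB
        have ht0 : 0 ≤ t := htB.1.le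
        have ht1 : t ≤ θ := htB.2.trans hBθ
        obtain ⟨hf1, hF1, hz1, hr1⟩ :=
          key_est r θ hθ f₀ αs w M W hM0 hW1 hf hw ε hεabs t ht0 ht1 hGt l
        rw [← hEdef] at hf1 hF1 hz1 hr1
        have ha := hGt l
        have hPb := hexpP t ht0 ht1
        have hbW : |w (t + θ * (l : ℝ))| ≤ W := hw _
        set a := αs (t + θ * (l : ℝ)) with ha'
        set b := w (t + θ * (l : ℝ)) with hb'
        set P := Real.exp (-ρ * (t + θ * (l : ℝ))) with hP'
        set F := fDen r θ f₀ (fun s => αs s + ε * w s) l t with hF'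
        set fl := fDen r θ f₀ αs l t with hfl'
        set zl := zSens r θ f₀ αs w l t with hzl'
        have haa : |a| ≤ 1 := abs_le.2 ⟨by linarith [ha.1], ha.2⟩
        have h1a : |1 - a| ≤ 1 := abs_le.2 ⟨by linarith [ha.2], by linarith [ha.1]⟩
        have h12a : |1 - 2 * a| ≤ 1 := abs_le.2 ⟨by linarith [ha.2], by linarith [ha.1]⟩
        have hεb : |ε * b| ≤ W := by
          rw [abs_mul]
          calc |ε| * |b| ≤ 1 * W := mul_le_mul hεabs hbW (abs_nonneg _) zero_le_one
            _ = W := one_mul W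
        have hab : |a + ε * b| ≤ 1 + W := (abs_add_le _ _).trans (add_le_add haa hεb)
        have h1ab : |1 - (a + ε * b)| ≤ 1 + W := by
          have he : 1 - (a + ε * b) = (1 - a) - ε * b := by ring
          rw [he]
          exact (abs_sub _ _).trans (add_le_add h1a hεb)
        have hsq : |ε ^ 2| ≤ ε ^ 2 := le_of_eq (abs_of_nonneg (sq_nonneg ε))
        have hb2 : |b ^ 2| ≤ W ^ 2 := by
          rw [abs_pow]
          exact pow_le_pow_left₀ (abs_nonneg b) hbW 2
        refine ⟨abs_mul_le4 hPb hab h1ab hF1, abs_mul_le4 hPb haa h1a hf1, ?_, ?_⟩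
        · exact abs_mul_le2 hPb ((abs_add_le _ _).trans
            (add_le_add (abs_mul_le2 (abs_mul_le2 hbW h12a) hf1)
              (abs_mul_le2 (abs_mul_le2 haa h1a) hz1)))
        · have hid : P * (a + ε * b) * (1 - (a + ε * b)) * F - P * a * (1 - a) * fl
              - ε * (P * (b * (1 - 2 * a) * fl + a * (1 - a) * zl))
              = P * (a * (1 - a) * (F - fl - ε * zl)
                + ε * b * (1 - 2 * a) * (F - fl - ε * zl)
                + ε ^ 2 * b * (1 - 2 * a) * zl - ε ^ 2 * b ^ 2 * F) := by ring
          rw [hid]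
          have t1 : |a * (1 - a) * (F - fl - ε * zl)| ≤ 1 * 1 * (ε ^ 2 * Rb E M W l) :=
            abs_mul_le2 (abs_mul_le2 haa h1a) hr1
          have t2 : |ε * b * (1 - 2 * a) * (F - fl - ε * zl)|
              ≤ 1 * W * 1 * (ε ^ 2 * Rb E M W l) := abs_mul_le4 hεabs hbW h12a hr1
          have t3 : |ε ^ 2 * b * (1 - 2 * a) * zl| ≤ ε ^ 2 * W * 1 * Zb E M W l :=
            abs_mul_le4 hsq hbW h12a hz1
          have t4 : |ε ^ 2 * b ^ 2 * F| ≤ ε ^ 2 * W ^ 2 * Db E M W l :=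
            abs_mul_le2 (abs_mul_le2 hsq hb2) hF1
          have hX : |a * (1 - a) * (F - fl - ε * zl)
                + ε * b * (1 - 2 * a) * (F - fl - ε * zl)
                + ε ^ 2 * b * (1 - 2 * a) * zl - ε ^ 2 * b ^ 2 * F|
              ≤ 1 * 1 * (ε ^ 2 * Rb E M W l) + 1 * W * 1 * (ε ^ 2 * Rb E M W l)
                + ε ^ 2 * W * 1 * Zb E M W l + ε ^ 2 * W ^ 2 * Db E M W l := by
            calc |a * (1 - a) * (F - fl - ε * zl)
                + ε * b * (1 - 2 * a) * (F - fl - ε * zl)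
                + ε ^ 2 * b * (1 - 2 * a) * zl - ε ^ 2 * b ^ 2 * F|
                ≤ |a * (1 - a) * (F - fl - ε * zl)
                  + ε * b * (1 - 2 * a) * (F - fl - ε * zl)
                  + ε ^ 2 * b * (1 - 2 * a) * zl| + |ε ^ 2 * b ^ 2 * F| := abs_sub _ _
              _ ≤ (|a * (1 - a) * (F - fl - ε * zl)
                  + ε * b * (1 - 2 * a) * (F - fl - ε * zl)|
                  + |ε ^ 2 * b * (1 - 2 * a) * zl|) + |ε ^ 2 * b ^ 2 * F| :=
                  add_le_add (abs_add_le _ _) le_rfl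
              _ ≤ ((|a * (1 - a) * (F - fl - ε * zl)|
                  + |ε * b * (1 - 2 * a) * (F - fl - ε * zl)|)
                  + |ε ^ 2 * b * (1 - 2 * a) * zl|) + |ε ^ 2 * b ^ 2 * F| :=
                  add_le_add (add_le_add (abs_add_le _ _) le_rfl) le_rfl
              _ ≤ _ := add_le_add (add_le_add (add_le_add t1 t2) t3) t4
          calc |P * (a * (1 - a) * (F - fl - ε * zl)
                + ε * b * (1 - 2 * a) * (F - fl - ε * zl)
                + ε ^ 2 * b * (1 - 2 * a) * zl - ε ^ 2 * b ^ 2 * F)|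
              ≤ P0 * (1 * 1 * (ε ^ 2 * Rb E M W l) + 1 * W * 1 * (ε ^ 2 * Rb E M W l)
                + ε ^ 2 * W * 1 * Zb E M W l + ε ^ 2 * W ^ 2 * Db E M W l) :=
                abs_mul_le2 hPb hX
            _ = ε ^ 2 * Cb P0 E M W l := by unfold Cb; ring
      have hIε : IntervalIntegrable (fun t : ℝ => Real.exp (-ρ * (t + θ * (l : ℝ))) *
          (αs (t + θ * (l : ℝ)) + ε * w (t + θ * (l : ℝ))) *
          (1 - (αs (t + θ * (l : ℝ)) + ε * w (t + θ * (l : ℝ)))) *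
          fDen r θ f₀ (fun s => αs s + ε * w s) l t) volume 0 B :=
        intervalIntegrable_of_bound hB0 hGεm (hae.mono fun t h ht => (h ht).1)
      have hI0 : IntervalIntegrable (fun t : ℝ => Real.exp (-ρ * (t + θ * (l : ℝ))) *
          αs (t + θ * (l : ℝ)) * (1 - αs (t + θ * (l : ℝ))) * fDen r θ f₀ αs l t) volume 0 B :=
        intervalIntegrable_of_bound hB0 hG0m (hae.mono fun t h ht => (h ht).2.1)
      have hID : IntervalIntegrable (fun t : ℝ => Real.exp (-ρ * (t + θ * (l : ℝ))) *
          (w (t + θ * (l : ℝ)) * (1 - 2 * αs (t + θ * (l : ℝ))) * fDen r θ f₀ αs l t +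
            αs (t + θ * (l : ℝ)) * (1 - αs (t + θ * (l : ℝ))) * zSens r θ f₀ αs w l t))
          volume 0 B :=
        intervalIntegrable_of_bound hB0 hDdm (hae.mono fun t h ht => (h ht).2.2.1)
      have heq : (∫ t in (0:ℝ)..B, (Real.exp (-ρ * (t + θ * (l : ℝ))) *
              (αs (t + θ * (l : ℝ)) + ε * w (t + θ * (l : ℝ))) *
              (1 - (αs (t + θ * (l : ℝ)) + ε * w (t + θ * (l : ℝ)))) *
              fDen r θ f₀ (fun s => αs s + ε * w s) l t
            - Real.exp (-ρ * (t + θ * (l : ℝ))) * αs (t + θ * (l : ℝ)) *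
              (1 - αs (t + θ * (l : ℝ))) * fDen r θ f₀ αs l t
            - ε * (Real.exp (-ρ * (t + θ * (l : ℝ))) *
              (w (t + θ * (l : ℝ)) * (1 - 2 * αs (t + θ * (l : ℝ))) * fDen r θ f₀ αs l t +
                αs (t + θ * (l : ℝ)) * (1 - αs (t + θ * (l : ℝ))) *
                  zSens r θ f₀ αs w l t))))
          = (∫ t in (0:ℝ)..B, Real.exp (-ρ * (t + θ * (l : ℝ))) *
              (αs (t + θ * (l : ℝ)) + ε * w (t + θ * (l : ℝ))) *
              (1 - (αs (t + θ * (l : ℝ)) + ε * w (t + θ * (l : ℝ)))) *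
              fDen r θ f₀ (fun s => αs s + ε * w s) l t)
            - (∫ t in (0:ℝ)..B, Real.exp (-ρ * (t + θ * (l : ℝ))) * αs (t + θ * (l : ℝ)) *
              (1 - αs (t + θ * (l : ℝ))) * fDen r θ f₀ αs l t)
            - ε * (∫ t in (0:ℝ)..B, Real.exp (-ρ * (t + θ * (l : ℝ))) *
              (w (t + θ * (l : ℝ)) * (1 - 2 * αs (t + θ * (l : ℝ))) * fDen r θ f₀ αs l t +
                αs (t + θ * (l : ℝ)) * (1 - αs (t + θ * (l : ℝ))) *
                  zSens r θ f₀ αs w l t)) := by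
        rw [intervalIntegral.integral_sub (hIε.sub hI0) (hID.const_mul ε),
          intervalIntegral.integral_sub hIε hI0, intervalIntegral.integral_const_mul]
      rw [← heq, ← Real.norm_eq_abs]
      have hCb0 : 0 ≤ Cb P0 E M W l := Cb_nonneg hP00 hE0 hM0 hW0 l
      have hbd : ∀ᵐ t ∂(volume.restrict (Set.uIoc (0:ℝ) B)),
          ‖Real.exp (-ρ * (t + θ * (l : ℝ))) *
              (αs (t + θ * (l : ℝ)) + ε * w (t + θ * (l : ℝ))) *
              (1 - (αs (t + θ * (l : ℝ)) + ε * w (t + θ * (l : ℝ)))) *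
              fDen r θ f₀ (fun s => αs s + ε * w s) l t
            - Real.exp (-ρ * (t + θ * (l : ℝ))) * αs (t + θ * (l : ℝ)) *
              (1 - αs (t + θ * (l : ℝ))) * fDen r θ f₀ αs l t
            - ε * (Real.exp (-ρ * (t + θ * (l : ℝ))) *
              (w (t + θ * (l : ℝ)) * (1 - 2 * αs (t + θ * (l : ℝ))) * fDen r θ f₀ αs l t +
                αs (t + θ * (l : ℝ)) * (1 - αs (t + θ * (l : ℝ))) *
                  zSens r θ f₀ αs w l t))‖ ≤ ε ^ 2 * Cb P0 E M W l := by
        rw [Set.uIoc_of_le hB0, ae_restrict_iff' measurableSet_Ioc]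
        filter_upwards [hae] with t h ht
        rw [Real.norm_eq_abs]
        exact (h ht).2.2.2
      calc ‖∫ t in (0:ℝ)..B, (Real.exp (-ρ * (t + θ * (l : ℝ))) *
              (αs (t + θ * (l : ℝ)) + ε * w (t + θ * (l : ℝ))) *
              (1 - (αs (t + θ * (l : ℝ)) + ε * w (t + θ * (l : ℝ)))) *
              fDen r θ f₀ (fun s => αs s + ε * w s) l t
            - Real.exp (-ρ * (t + θ * (l : ℝ))) * αs (t + θ * (l : ℝ)) *
              (1 - αs (t + θ * (l : ℝ))) * fDen r θ f₀ αs l t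
            - ε * (Real.exp (-ρ * (t + θ * (l : ℝ))) *
              (w (t + θ * (l : ℝ)) * (1 - 2 * αs (t + θ * (l : ℝ))) * fDen r θ f₀ αs l t +
                αs (t + θ * (l : ℝ)) * (1 - αs (t + θ * (l : ℝ))) *
                  zSens r θ f₀ αs w l t)))‖
          ≤ |∫ _t in (0:ℝ)..B, ε ^ 2 * Cb P0 E M W l| :=
            intervalIntegral.norm_integral_le_abs_of_norm_le hbd intervalIntegrable_const
        _ ≤ ε ^ 2 * (θ * Cb P0 E M W l) := by
            rw [intervalIntegral.integral_const, sub_zero, smul_eq_mul,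
              abs_of_nonneg (by positivity)]
            calc B * (ε ^ 2 * Cb P0 E M W l) ≤ θ * (ε ^ 2 * Cb P0 E M W l) :=
                  mul_le_mul_of_nonneg_right hBθ (by positivity)
              _ = ε ^ 2 * (θ * Cb P0 E M W l) := by ring
    have hVl : ∀ l ∈ Finset.range k,
        ε * (∫ t in (0:ℝ)..θ, Real.exp (-ρ * (t + θ * (l : ℝ))) *
          (w (t + θ * (l : ℝ)) * (1 - 2 * αs (t + θ * (l : ℝ))) * fDen r θ f₀ αs l t +
            αs (t + θ * (l : ℝ)) * (1 - αs (t + θ * (l : ℝ))) * zSens r θ f₀ αs w l t))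
        ≤ (∫ t in (0:ℝ)..θ, Real.exp (-ρ * (t + θ * (l : ℝ))) *
            (αs (t + θ * (l : ℝ)) + ε * w (t + θ * (l : ℝ))) *
            (1 - (αs (t + θ * (l : ℝ)) + ε * w (t + θ * (l : ℝ)))) *
            fDen r θ f₀ (fun s => αs s + ε * w s) l t)
          - (∫ t in (0:ℝ)..θ, Real.exp (-ρ * (t + θ * (l : ℝ))) * αs (t + θ * (l : ℝ)) *
            (1 - αs (t + θ * (l : ℝ))) * fDen r θ f₀ αs l t)
          + ε ^ 2 * (θ * Cb P0 E M W l) := by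
      intro l hl
      have h := (abs_le.1 (main l (Finset.mem_range.1 hl).le θ hθ.le le_rfl)).1
      linarith
    have hBk0 : (0:ℝ) ≤ T - (k : ℝ) * θ := by linarith
    have hBkθ : T - (k : ℝ) * θ ≤ θ := by nlinarith
    have hVk : ε * (∫ t in (0:ℝ)..(T - (k : ℝ) * θ),
          Real.exp (-ρ * (t + θ * (k : ℝ))) *
          (w (t + θ * (k : ℝ)) * (1 - 2 * αs (t + θ * (k : ℝ))) * fDen r θ f₀ αs k t +
            αs (t + θ * (k : ℝ)) * (1 - αs (t + θ * (k : ℝ))) * zSens r θ f₀ αs w k t))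
        ≤ (∫ t in (0:ℝ)..(T - (k : ℝ) * θ), Real.exp (-ρ * (t + θ * (k : ℝ))) *
            (αs (t + θ * (k : ℝ)) + ε * w (t + θ * (k : ℝ))) *
            (1 - (αs (t + θ * (k : ℝ)) + ε * w (t + θ * (k : ℝ)))) *
            fDen r θ f₀ (fun s => αs s + ε * w s) k t)
          - (∫ t in (0:ℝ)..(T - (k : ℝ) * θ), Real.exp (-ρ * (t + θ * (k : ℝ))) *
            αs (t + θ * (k : ℝ)) * (1 - αs (t + θ * (k : ℝ))) * fDen r θ f₀ αs k t)
          + ε ^ 2 * (θ * Cb P0 E M W k) := by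
      have h := (abs_le.1 (main k le_rfl (T - (k : ℝ) * θ) hBk0 hBkθ)).1
      linarith
    have hC1 : 0 < ε := hε1
    rw [← mul_le_mul_iff_right₀ hε1, mul_add, Finset.mul_sum]
    calc (∑ l ∈ Finset.range k, ε * ∫ t in (0:ℝ)..θ,
            Real.exp (-ρ * (t + θ * (l : ℝ))) *
            (w (t + θ * (l : ℝ)) * (1 - 2 * αs (t + θ * (l : ℝ))) * fDen r θ f₀ αs l t +
              αs (t + θ * (l : ℝ)) * (1 - αs (t + θ * (l : ℝ))) * zSens r θ f₀ αs w l t)) +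
          ε * (∫ t in (0:ℝ)..(T - (k : ℝ) * θ), Real.exp (-ρ * (t + θ * (k : ℝ))) *
            (w (t + θ * (k : ℝ)) * (1 - 2 * αs (t + θ * (k : ℝ))) * fDen r θ f₀ αs k t +
              αs (t + θ * (k : ℝ)) * (1 - αs (t + θ * (k : ℝ))) * zSens r θ f₀ αs w k t))
        ≤ (∑ l ∈ Finset.range k,
            ((∫ t in (0:ℝ)..θ, Real.exp (-ρ * (t + θ * (l : ℝ))) *
              (αs (t + θ * (l : ℝ)) + ε * w (t + θ * (l : ℝ))) *
              (1 - (αs (t + θ * (l : ℝ)) + ε * w (t + θ * (l : ℝ)))) *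
              fDen r θ f₀ (fun s => αs s + ε * w s) l t)
            - (∫ t in (0:ℝ)..θ, Real.exp (-ρ * (t + θ * (l : ℝ))) * αs (t + θ * (l : ℝ)) *
              (1 - αs (t + θ * (l : ℝ))) * fDen r θ f₀ αs l t)
            + ε ^ 2 * (θ * Cb P0 E M W l))) +
          ((∫ t in (0:ℝ)..(T - (k : ℝ) * θ), Real.exp (-ρ * (t + θ * (k : ℝ))) *
              (αs (t + θ * (k : ℝ)) + ε * w (t + θ * (k : ℝ))) *
              (1 - (αs (t + θ * (k : ℝ)) + ε * w (t + θ * (k : ℝ)))) *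
              fDen r θ f₀ (fun s => αs s + ε * w s) k t)
            - (∫ t in (0:ℝ)..(T - (k : ℝ) * θ), Real.exp (-ρ * (t + θ * (k : ℝ))) *
              αs (t + θ * (k : ℝ)) * (1 - αs (t + θ * (k : ℝ))) * fDen r θ f₀ αs k t)
            + ε ^ 2 * (θ * Cb P0 E M W k)) := add_le_add (Finset.sum_le_sum hVl) hVk
      _ ≤ ε * (ε * C) := by
          have hC2 : ε * (ε * C) = (∑ l ∈ Finset.range k, ε ^ 2 * (θ * Cb P0 E M W l))
              + ε ^ 2 * (θ * Cb P0 E M W k) := by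
            calc ε * (ε * C) = ε ^ 2 * C := by ring
              _ = ε ^ 2 * (∑ l ∈ Finset.range k, θ * Cb P0 E M W l)
                  + ε ^ 2 * (θ * Cb P0 E M W k) := by rw [hCdef, mul_add]
              _ = _ := by rw [Finset.mul_sum]
          rw [hC2]
          simp only [Finset.sum_add_distrib, Finset.sum_sub_distrib]
          linarith [hrev]
  by_contra hcon
  push_neg at hcon
  set V := ((∑ l ∈ Finset.range k, ∫ t in (0 : ℝ)..θ,
        Real.exp (-ρ * (t + θ * (l : ℝ))) *
          (w (t + θ * (l : ℝ)) * (1 - 2 * αs (t + θ * (l : ℝ))) * fDen r θ f₀ αs l t +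
            αs (t + θ * (l : ℝ)) * (1 - αs (t + θ * (l : ℝ))) * zSens r θ f₀ αs w l t)) +
      (∫ t in (0 : ℝ)..(T - (k : ℝ) * θ),
        Real.exp (-ρ * (t + θ * (k : ℝ))) *
          (w (t + θ * (k : ℝ)) * (1 - 2 * αs (t + θ * (k : ℝ))) * fDen r θ f₀ αs k t +
            αs (t + θ * (k : ℝ)) * (1 - αs (t + θ * (k : ℝ))) * zSens r θ f₀ αs w k t))) with hVdef
  have hV0 : 0 < V := hcon
  have hεp : 0 < min (min ε₀ 1) (V / (2 * (C + 1))) :=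
    lt_min (lt_min hε₀ one_pos) (by positivity)
  have hkey := key _ hεp (le_trans (min_le_left _ _) (min_le_left _ _))
    (le_trans (min_le_left _ _) (min_le_right _ _))
  have hle : min (min ε₀ 1) (V / (2 * (C + 1))) ≤ V / (2 * (C + 1)) := min_le_right _ _
  have h2 : V ≤ (V / (2 * (C + 1))) * C :=
    hkey.trans (mul_le_mul_of_nonneg_right hle hC0)
  rw [div_mul_eq_mul_div, le_div_iff₀ (by positivity)] at h2
  nlinarith [mul_nonneg hV0.le hC0]
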